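/- Let G ⊆ ℂ×ℂ be open, let φ₁, φ₂ : ℂ×ℂ → ℂ, set ψ = (φ₁,φ₂), and suppose that at a point p = (a,b) ∈ G there is L = (L₁,L₂) ∈ ℂ×ℂ such that the bicomplex difference quotient (ψ(p+Δp) − ψ(p)) ⊙ (Δp)⁻¹ tends to L as Δp → 0 restricted to nonsingular increments Δp. Then the functions z ↦ φ₁(z,b) and z ↦ φ₂(z,b) are complex differentiable at a with derivatives L₁ and L₂ respectively, and the functions z ↦ φ₁(a,z) and z ↦ φ₂(a,z) are complex differentiable at b with derivatives −L₂ and L₁ respectively; in particular the bicomplex Cauchy–Riemann equations ∂φ₁/∂a = ∂φ₂/∂b and ∂φ₂/∂a = −∂φ₁/∂b hold at p. -/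

import Mathlib

/-- Bicomplex multiplication on ℂ × ℂ. -/
def bmul (p q : ℂ × ℂ) : ℂ × ℂ := (p.1 * q.1 - p.2 * q.2, p.2 * q.1 + p.1 * q.2)

/-- Bicomplex inverse (defined for nonsingular numbers). -/
noncomputable def binv (p : ℂ × ℂ) : ℂ × ℂ :=
  (p.1 / (p.1 ^ 2 + p.2 ^ 2), -p.2 / (p.1 ^ 2 + p.2 ^ 2))

/-- The set of nonsingular bicomplex numbers. -/
def nonsingularSet : Set (ℂ × ℂ) := {q | q.1 ^ 2 + q.2 ^ 2 ≠ 0}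

open Filter Topology

lemma hasDerivAt_of_tendsto_quot (f : ℂ → ℂ) (a l : ℂ)
    (h : Tendsto (fun t : ℂ => (f (a + t) - f a) / t) (𝓝[≠] (0:ℂ)) (𝓝 l)) :
    HasDerivAt f l a := by
  rw [hasDerivAt_iff_tendsto_slope]
  have h1 : Tendsto (fun z : ℂ => z - a) (𝓝[≠] a) (𝓝[≠] (0:ℂ)) := by
    apply tendsto_nhdsWithin_of_tendsto_nhds_of_eventually_within
    · have : Tendsto (fun z : ℂ => z - a) (𝓝 a) (𝓝 (a - a)) :=
        (continuous_id.sub continuous_const).tendsto a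
      simpa using this.mono_left nhdsWithin_le_nhds
    · filter_upwards [self_mem_nhdsWithin] with z hz
      exact sub_ne_zero.mpr hz
  have h2 := h.comp h1
  refine h2.congr fun z => ?_
  simp [slope_def_field, Function.comp]

lemma emb1 : Tendsto (fun t : ℂ => ((t, 0) : ℂ × ℂ)) (𝓝[≠] (0:ℂ))
    (𝓝[nonsingularSet] (0 : ℂ × ℂ)) := by
  apply tendsto_nhdsWithin_of_tendsto_nhds_of_eventually_within
  · exact (Continuous.prodMk continuous_id continuous_const).tendsto 0 |>.mono_left
      nhdsWithin_le_nhds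
  · filter_upwards [self_mem_nhdsWithin] with t ht
    have hne : t ≠ 0 := ht
    simp [nonsingularSet, pow_eq_zero_iff, hne]

lemma emb2 : Tendsto (fun t : ℂ => ((0, t) : ℂ × ℂ)) (𝓝[≠] (0:ℂ))
    (𝓝[nonsingularSet] (0 : ℂ × ℂ)) := by
  apply tendsto_nhdsWithin_of_tendsto_nhds_of_eventually_within
  · exact (Continuous.prodMk continuous_const continuous_id).tendsto 0 |>.mono_left
      nhdsWithin_le_nhds
  · filter_upwards [self_mem_nhdsWithin] with t ht
    have hne : t ≠ 0 := ht
    simp [nonsingularSet, pow_eq_zero_iff, hne]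

theorem bicomplex_deriv_implies_CR (G : Set (ℂ × ℂ)) (hG : IsOpen G)
    (φ₁ φ₂ : ℂ × ℂ → ℂ) (a b : ℂ) (hp : (a, b) ∈ G) (L : ℂ × ℂ)
    (hlim : Filter.Tendsto
      (fun Δp : ℂ × ℂ =>
        bmul ((φ₁ ((a, b) + Δp), φ₂ ((a, b) + Δp)) - (φ₁ (a, b), φ₂ (a, b))) (binv Δp))
      (nhdsWithin 0 nonsingularSet) (nhds L)) :
    HasDerivAt (fun z => φ₁ (z, b)) L.1 a ∧
    HasDerivAt (fun z => φ₂ (z, b)) L.2 a ∧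
    HasDerivAt (fun z => φ₁ (a, z)) (-L.2) b ∧
    HasDerivAt (fun z => φ₂ (a, z)) L.1 b := by
  have H1 := hlim.comp emb1
  have H2 := hlim.comp emb2
  have e1 : ∀ᶠ t : ℂ in 𝓝[≠] 0,
      (fun Δp : ℂ × ℂ =>
        bmul ((φ₁ ((a, b) + Δp), φ₂ ((a, b) + Δp)) - (φ₁ (a, b), φ₂ (a, b))) (binv Δp))
        ((t, 0)) = ((φ₁ (a + t, b) - φ₁ (a, b)) / t, (φ₂ (a + t, b) - φ₂ (a, b)) / t) := by
    filter_upwards [self_mem_nhdsWithin] with t ht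
    have hne : t ≠ 0 := ht
    simp only [bmul, binv, Prod.mk_add_mk, Prod.mk_sub_mk, Prod.fst, Prod.snd]
    rw [Prod.mk.injEq]
    constructor <;> field_simp <;> ring
  have e2 : ∀ᶠ t : ℂ in 𝓝[≠] 0,
      (fun Δp : ℂ × ℂ =>
        bmul ((φ₁ ((a, b) + Δp), φ₂ ((a, b) + Δp)) - (φ₁ (a, b), φ₂ (a, b))) (binv Δp))
        ((0, t)) = ((φ₂ (a, b + t) - φ₂ (a, b)) / t, -((φ₁ (a, b + t) - φ₁ (a, b)) / t)) := by
    filter_upwards [self_mem_nhdsWithin] with t ht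
    have hne : t ≠ 0 := ht
    simp only [bmul, binv, Prod.mk_add_mk, Prod.mk_sub_mk, Prod.fst, Prod.snd]
    rw [Prod.mk.injEq]
    constructor <;> field_simp <;> ring
  have H1' := (H1.congr' e1)
  have H2' := (H2.congr' e2)
  refine ⟨hasDerivAt_of_tendsto_quot _ _ _ ?_, hasDerivAt_of_tendsto_quot _ _ _ ?_,
    hasDerivAt_of_tendsto_quot _ _ _ ?_, hasDerivAt_of_tendsto_quot _ _ _ ?_⟩
  · exact (continuous_fst.tendsto L).comp H1'
  · exact (continuous_snd.tendsto L).comp H1'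
  · have := (continuous_snd.tendsto L).comp H2'
    simpa using this.neg
  · exact (continuous_fst.tendsto L).comp H2'
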